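/- arXiv:1006.4381 — 3 statements merged into one kernel-verified Lean document; each statement's English description precedes it below -/
import Mathlib

section
/- Let R be a Dedekind domain, Λ an R-order in a finite-dimensional semisimple algebra over the fraction field of R, and M, N two Λ-lattices in the same genus (M_𝔭 ≅ N_𝔭 as Λ_𝔭-modules for all maximal ideals 𝔭 of R). Then for any nonzero ideal 𝔞 of R there exists an injective Λ-module homomorphism φ : M → N such that 𝔞 + ann_R(coker φ) = R. -/
/-!
STATEMENT 3 (Roiter's Lemma): R a Dedekind domain, Λ an R-order in a finite-dimensional
semisimple algebra A over the fraction field K of R, and M, N Λ-lattices in the same genus.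
Then for any nonzero ideal 𝔞 of R there is an injective Λ-homomorphism φ : M → N with
𝔞 + ann_R(coker φ) = R.

"Same genus" (M_𝔭 ≅ N_𝔭 as Λ_𝔭-modules for all maximal 𝔭) is rendered by the standard
equivalent form for finitely generated lattices: for each maximal ideal 𝔭 there are
Λ-homomorphisms f : M → N and g : N → M and s ∈ R \ 𝔭 with g∘f = s·id and f∘g = s·id.
-/

open Polynomial in
lemma keyLemma3 {R : Type} [CommRing R] {Q : Type} [AddCommGroup Q] [Module R Q]
    [Module.Finite R Q] (𝔭 : Ideal R) (h𝔭 : 𝔭.IsPrime) (t : R) (ht : t ∉ 𝔭)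
    (h : ∀ q : Q, t • q ∈ 𝔭 • (⊤ : Submodule R Q)) :
    ∃ u, u ∉ 𝔭 ∧ ∀ q : Q, u • q = 0 := by
  set f : Module.End R Q := algebraMap R (Module.End R Q) t with hf
  have hr : LinearMap.range f ≤ 𝔭 • ⊤ := by
    rintro q ⟨x, rfl⟩
    have : f x = t • x := by rw [hf, Module.algebraMap_end_eq_smul_id]; rfl
    rw [this]; exact h x
  obtain ⟨p, hmonic, -, hcoeff, heval⟩ :=
    LinearMap.exists_monic_and_coeff_mem_pow_and_aeval_eq_zero_of_range_le_smul R f 𝔭 hr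
  refine ⟨p.eval t, ?_, ?_⟩
  · intro hmem
    set n := p.natDegree
    have hmap : p.map (Ideal.Quotient.mk 𝔭) = X ^ n := by
      ext k
      rw [coeff_map, coeff_X_pow]
      rcases lt_trichotomy k n with hk | hk | hk
      · have : p.coeff k ∈ 𝔭 := by
          have := hcoeff k
          exact Ideal.pow_le_self (Nat.sub_ne_zero_of_lt hk) this
        simp [if_neg hk.ne, Ideal.Quotient.eq_zero_iff_mem.mpr this]
      · simp [hk, n, hmonic.coeff_natDegree]
      · rw [p.coeff_eq_zero_of_natDegree_lt hk]
        simp [if_neg hk.ne']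
    have h0 : (Ideal.Quotient.mk 𝔭) (p.eval t) = 0 := Ideal.Quotient.eq_zero_iff_mem.mpr hmem
    rw [← Polynomial.eval₂_at_apply, ← Polynomial.eval_map, hmap, Polynomial.eval_pow,
      Polynomial.eval_X] at h0
    have : (Ideal.Quotient.mk 𝔭) t ≠ 0 := fun hz => ht (Ideal.Quotient.eq_zero_iff_mem.mp hz)
    exact this (pow_eq_zero_iff' .. |>.mp h0).1
  · intro q
    have h1 : Polynomial.aeval f p = algebraMap R (Module.End R Q) (p.eval t) := by
      rw [hf, Polynomial.aeval_algebraMap_apply_eq_algebraMap_eval]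
    have := congrArg (fun (e : Module.End R Q) => e q) heval
    simp only [h1, Module.algebraMap_end_eq_smul_id] at this
    simpa using this

noncomputable section

theorem statement3 (R : Type) [CommRing R] [IsDedekindDomain R]
    (K : Type) [Field K] [Algebra R K] [IsFractionRing R K]
    -- A is a finite-dimensional semisimple K-algebra
    (A : Type) [Ring A] [Algebra K A] [FiniteDimensional K A] [IsSemisimpleRing A]
    -- Λ is an R-order in A
    (Λ : Type) [Ring Λ] [Algebra R Λ] [Module.Finite R Λ]
    (jΛ : Λ →+* A) (hjΛ : Function.Injective jΛ)
    (hΛfull : Submodule.span K (Set.range jΛ) = ⊤)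
    -- M and N are Λ-lattices
    (M N : Type) [AddCommGroup M] [AddCommGroup N]
    [Module Λ M] [Module Λ N] [Module R M] [Module R N]
    [IsScalarTower R Λ M] [IsScalarTower R Λ N]
    [Module.Finite R M] [Module.Finite R N]
    (hMtf : ∀ (r : R) (x : M), r • x = 0 → r = 0 ∨ x = 0)
    (hNtf : ∀ (r : R) (y : N), r • y = 0 → r = 0 ∨ y = 0)
    -- M and N are in the same genus
    (hgenus : ∀ 𝔭 : Ideal R, 𝔭.IsMaximal →
      ∃ (f : M →ₗ[Λ] N) (g : N →ₗ[Λ] M) (s : R), s ∉ 𝔭 ∧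
        (∀ x : M, g (f x) = s • x) ∧ (∀ y : N, f (g y) = s • y))
    -- 𝔞 is a nonzero ideal of R
    (𝔞 : Ideal R) (h𝔞 : 𝔞 ≠ ⊥) :
    ∃ φ : M →ₗ[Λ] N, Function.Injective φ ∧
      𝔞 ⊔ Module.annihilator R (N ⧸ LinearMap.range φ) = ⊤ := by
  classical
  -- the finite set of maximal ideals containing 𝔞, plus one auxiliary maximal ideal
  obtain ⟨𝔭₀, h𝔭₀⟩ := Ideal.exists_maximal R
  have hSfin : {𝔭 : Ideal R | 𝔭.IsMaximal ∧ 𝔞 ≤ 𝔭}.Finite := by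
    apply Set.Finite.subset ((Ideal.finite_factors h𝔞).image
      (fun v => v.asIdeal))
    rintro 𝔭 ⟨hmax, hle⟩
    have hne : 𝔭 ≠ ⊥ := by
      rintro rfl
      exact h𝔞 (le_bot_iff.mp hle)
    exact ⟨⟨𝔭, hmax.isPrime, hne⟩, Ideal.dvd_iff_le.mpr hle, rfl⟩
  set T : Finset (Ideal R) := insert 𝔭₀ hSfin.toFinset with hT
  have hmaxT : ∀ 𝔭 ∈ T, Ideal.IsMaximal 𝔭 := by
    intro 𝔭 h𝔭
    rcases Finset.mem_insert.mp h𝔭 with h | h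
    · exact h ▸ h𝔭₀
    · exact (hSfin.mem_toFinset.mp h).1
  set ι := {𝔭 : Ideal R // 𝔭 ∈ T} with hι
  -- choose the genus data
  have h1 : ∀ P : ι, ∃ (f : M →ₗ[Λ] N) (g : N →ₗ[Λ] M) (s : R), s ∉ P.1 ∧
      (∀ x : M, g (f x) = s • x) ∧ (∀ y : N, f (g y) = s • y) :=
    fun P => hgenus P.1 (hmaxT P.1 P.2)
  choose f g s hs hgf hfg using h1
  -- choose the CRT idempotent-like elements
  have h2 : ∀ P : ι, ∃ e : R, e ∉ P.1 ∧ ∀ Q : ι, Q ≠ P → e ∈ Q.1 := by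
    intro P
    have hP := hmaxT P.1 P.2
    have hnle : ¬ ((T.erase P.1).inf id ≤ P.1) := by
      intro hle
      obtain ⟨𝔮, h𝔮, hle'⟩ := (hP.isPrime.inf_le').mp hle
      have := (hmaxT 𝔮 (Finset.mem_of_mem_erase h𝔮)).eq_of_le hP.ne_top hle'
      exact (Finset.ne_of_mem_erase h𝔮) this
    obtain ⟨e, he1, he2⟩ := SetLike.not_le_iff_exists.mp hnle
    refine ⟨e, he2, fun Q hQ => ?_⟩
    have : Q.1 ∈ T.erase P.1 :=
      Finset.mem_erase.mpr ⟨fun hc => hQ (Subtype.ext hc), Q.2⟩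
    exact (Finset.inf_le (f := id) this : _ ≤ Q.1) he1
  choose e he hee using h2
  haveI : Fintype ι := FinsetCoe.fintype T
  -- the homomorphism
  set φ : M →ₗ[Λ] N := ∑ P : ι, e P • f P with hφ
  -- key computation: modulo 𝔭 • N, φ ∘ g P is multiplication by e P * s P
  have key : ∀ (P : ι) (y : N),
      φ (g P y) - (e P * s P) • y ∈ P.1 • (⊤ : Submodule R N) := by
    intro P y
    have happ : φ (g P y) = ∑ Q : ι, e Q • f Q (g P y) := by
      rw [hφ, LinearMap.sum_apply]
      simp [LinearMap.smul_apply]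
    rw [happ, ← Finset.add_sum_erase Finset.univ _ (Finset.mem_univ P)]
    have hPterm : e P • f P (g P y) = (e P * s P) • y := by
      rw [hfg P y, mul_smul]
    rw [hPterm, add_sub_cancel_left]
    refine Submodule.sum_mem _ (fun Q hQ => ?_)
    have hQP : Q ≠ P := Finset.ne_of_mem_erase hQ
    exact Submodule.smul_mem_smul (hee Q P hQP.symm) trivial
  -- the quotient module and its annihilator elements
  set Q0 := N ⧸ LinearMap.range φ with hQ0
  let mkl : N →ₗ[R] Q0 :=
    { toFun := Submodule.Quotient.mk
      map_add' := fun _ _ => rfl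
      map_smul' := fun r y => (Submodule.Quotient.mk_smul (LinearMap.range φ) r y).symm }
  have hmkl_surj : Function.Surjective mkl := Submodule.Quotient.mk_surjective _

  have hann : ∀ P : ι, ∃ u, u ∉ P.1 ∧ u ∈ Module.annihilator R Q0 := by
    intro P
    have hP := hmaxT P.1 P.2
    have ht : e P * s P ∉ P.1 := fun hc =>
      ((hP.isPrime.mem_or_mem hc).elim (he P) (hs P))
    have hsm : ∀ q : Q0, (e P * s P) • q ∈ P.1 • (⊤ : Submodule R Q0) := by
      intro q
      obtain ⟨y, rfl⟩ := hmkl_surj q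
      have h1 : (e P * s P) • mkl y = mkl ((e P * s P) • y - φ (g P y)) := by
        rw [map_sub, ← map_smul]
        have : mkl (φ (g P y)) = 0 := (Submodule.Quotient.mk_eq_zero _).mpr
          (LinearMap.mem_range_self φ (g P y))
        rw [this, sub_zero]
      rw [h1]
      have h2 : (e P * s P) • y - φ (g P y) ∈ P.1 • (⊤ : Submodule R N) := by
        have := key P y
        simpa using (Submodule.neg_mem _ this)
      have h3 : mkl ((e P * s P) • y - φ (g P y)) ∈
          Submodule.map mkl (P.1 • (⊤ : Submodule R N)) :=
        Submodule.mem_map_of_mem h2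
      rw [Submodule.map_smul''] at h3
      exact Submodule.smul_mono le_rfl le_top h3
    obtain ⟨u, hu1, hu2⟩ := keyLemma3 P.1 hP.isPrime (e P * s P) ht hsm
    exact ⟨u, hu1, Module.mem_annihilator.mpr hu2⟩
  choose u hu huann using hann
  -- injectivity
  set P₀ : ι := ⟨𝔭₀, Finset.mem_insert_self _ _⟩ with hP₀
  set c : R := u P₀ * s P₀ with hc
  have hcnot : c ∉ 𝔭₀ := fun hmem =>
    (h𝔭₀.isPrime.mem_or_mem hmem).elim (hu P₀) (hs P₀)
  have hcne : c ≠ 0 := fun hc0 => hcnot (hc0 ▸ Ideal.zero_mem 𝔭₀)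
  set β : M →ₗ[R] M := ((g P₀).restrictScalars R).comp (φ.restrictScalars R) with hβ
  have hβapp : ∀ x : M, β x = g P₀ (φ x) := fun _ => rfl
  have hstep : ∀ x : M, ∃ m, c • x = β m := by
    intro x
    have h0 : u P₀ • mkl (f P₀ x) = (0 : Q0) :=
      Module.mem_annihilator.mp (huann P₀) _
    have h1 : u P₀ • f P₀ x ∈ LinearMap.range φ := by
      have : mkl (u P₀ • f P₀ x) = 0 := by rw [map_smul]; exact h0
      exact (Submodule.Quotient.mk_eq_zero _).mp this
    obtain ⟨m, hm⟩ := h1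
    refine ⟨m, ?_⟩
    rw [hc, mul_smul, ← hgf P₀ x, ← (g P₀).map_smul_of_tower, ← hm]
    exact (hβapp m).symm
  have hpow : ∀ (k : ℕ) (x : M), ∃ m, c ^ k • x = (β ^ k) m := by
    intro k
    induction k with
    | zero => exact fun x => ⟨x, by simp⟩
    | succ k ih =>
      intro x
      obtain ⟨m, hm⟩ := hstep x
      obtain ⟨m', hm'⟩ := ih m
      refine ⟨m', ?_⟩
      rw [pow_succ, mul_smul, hm, ← β.map_smul, hm', ← Module.End.mul_apply, ← pow_succ']
  haveI : IsNoetherian R M := inferInstance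
  obtain ⟨n0, hn⟩ := Filter.eventually_atTop.mp (Module.End.eventually_disjoint_ker_pow_range_pow β)
  set n := n0 + 1 with hn1
  have hdis := hn n (Nat.le_succ n0)
  have hinj : Function.Injective φ := by
    rw [← LinearMap.ker_eq_bot]
    rw [eq_bot_iff]
    intro x hx
    have hφx : φ x = 0 := LinearMap.mem_ker.mp hx
    have hβx : β x = 0 := by rw [hβapp, hφx, map_zero]
    obtain ⟨m, hm⟩ := hpow n x
    have hker : c ^ n • x ∈ LinearMap.ker (β ^ n) := by
      rw [LinearMap.mem_ker, (β ^ n).map_smul, hn1, pow_succ β n0, Module.End.mul_apply, hβx,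
        map_zero, smul_zero]
    have hrange : c ^ n • x ∈ LinearMap.range (β ^ n) := ⟨m, hm.symm⟩
    have hzero : c ^ n • x = 0 := Submodule.disjoint_def.mp hdis _ hker hrange
    rcases hMtf _ _ hzero with h | h
    · exact absurd h (pow_ne_zero n hcne)
    · exact (Submodule.mem_bot R).mpr h
  refine ⟨φ, hinj, ?_⟩
  by_contra hne
  obtain ⟨𝔪, h𝔪, hle⟩ := Ideal.exists_le_maximal _ hne
  have h𝔞𝔪 : 𝔞 ≤ 𝔪 := le_trans le_sup_left hle
  have hmem : 𝔪 ∈ T := Finset.mem_insert.mpr (Or.inr (hSfin.mem_toFinset.mpr ⟨h𝔪, h𝔞𝔪⟩))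
  exact hu ⟨𝔪, hmem⟩ ((le_trans le_sup_right hle) (huann ⟨𝔪, hmem⟩))
end
end

section
/- Let Δ be a maximal O_F-order in a central division F-algebra D, n ≥ 1, and let 𝔞 be a right ideal of Δ with left order Δ' = O_l(𝔞). Then the set Λ_{𝔞,n} of n×n matrices over D whose entries (i,j) with i,j ≤ n−1 lie in Δ, whose entries (i,n) with i ≤ n−1 lie in 𝔞^{-1}, whose entries (n,j) with j ≤ n−1 lie in 𝔞, and whose (n,n)-entry lies in Δ', is an O_F-order in the matrix algebra M_n(D). -/
/-!
STATEMENT 6: Δ a maximal O_F-order in a central division F-algebra D, 𝔞 a (full) right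
ideal of Δ with left order Δ' = O_l(𝔞) and inverse 𝔞⁻¹ = {x | 𝔞x𝔞 ⊆ 𝔞}.  Then the set
Λ_{𝔞,n} of n×n matrices over D with entries in Δ (resp. 𝔞⁻¹ in the last column,
𝔞 in the last row, Δ' in the corner) is an O_F-order in M_n(D).
Here n = m + 1 ≥ 1, and "last" denotes the final index.
-/

open NumberField

noncomputable section

def IsFullLattice (F D : Type) [Field F] [NumberField F] [Ring D] [Algebra F D]
    [Algebra (𝓞 F) D] (M : Submodule (𝓞 F) D) : Prop :=
  M.FG ∧ Submodule.span F (M : Set D) = ⊤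

def IsOrder (F D : Type) [Field F] [NumberField F] [Ring D] [Algebra F D]
    [Algebra (𝓞 F) D] (Λ : Subalgebra (𝓞 F) D) : Prop :=
  IsFullLattice F D (Subalgebra.toSubmodule Λ)

def IsMaximalOrder (F D : Type) [Field F] [NumberField F] [Ring D] [Algebra F D]
    [Algebra (𝓞 F) D] (Λ : Subalgebra (𝓞 F) D) : Prop :=
  IsOrder F D Λ ∧ ∀ Λ' : Subalgebra (𝓞 F) D, IsOrder F D Λ' → Λ ≤ Λ' → Λ' = Λ

/-- The inverse `𝔞⁻¹ = {x ∈ D | 𝔞·x·𝔞 ⊆ 𝔞}`. -/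
def invSet {D : Type} [DivisionRing D] (𝔞 : Set D) : Set D :=
  {x | ∀ a ∈ 𝔞, ∀ b ∈ 𝔞, a * x * b ∈ 𝔞}

/-- The left order `O_l(𝔞) = {x ∈ D | x𝔞 ⊆ 𝔞}`. -/
def leftOrderSet {D : Type} [DivisionRing D] (𝔞 : Set D) : Set D :=
  {x | ∀ a ∈ 𝔞, x * a ∈ 𝔞}

section Aux

set_option linter.unusedSectionVars false

/-- A submodule of an f.g. module over a Noetherian ring is f.g. -/
lemma fg_of_le_fg {R M : Type*} [Ring R] [IsNoetherianRing R] [AddCommGroup M] [Module R M]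
    {N P : Submodule R M} (h : N ≤ P) (hP : P.FG) : N.FG :=
  (isNoetherian_submodule.mp (isNoetherian_of_fg_of_noetherian P hP)) N h

variable {F D : Type} [Field F] [NumberField F] [DivisionRing D] [Algebra F D]
    [Algebra (𝓞 F) D] [IsScalarTower (𝓞 F) F D]

/-- `𝔞⁻¹` as a submodule. -/
def invSubmodule (𝔞 : Submodule (𝓞 F) D) : Submodule (𝓞 F) D where
  carrier := invSet (𝔞 : Set D)
  add_mem' := fun {x y} hx hy a ha b hb => by
    have h := 𝔞.add_mem (hx a ha b hb) (hy a ha b hb)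
    have e : a * (x + y) * b = a * x * b + a * y * b := by noncomm_ring
    rw [e]; exact h
  zero_mem' := fun a ha b hb => by
    simpa using 𝔞.zero_mem
  smul_mem' := fun c x hx a ha b hb => by
    have e : a * (c • x) * b = c • (a * x * b) := by
      rw [mul_smul_comm, smul_mul_assoc]
    rw [e]; exact 𝔞.smul_mem c (hx a ha b hb)

/-- `O_l(𝔞)` as a submodule. -/
def leftOrderSubmodule (𝔞 : Submodule (𝓞 F) D) : Submodule (𝓞 F) D where
  carrier := leftOrderSet (𝔞 : Set D)
  add_mem' := fun {x y} hx hy a ha => by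
    have h := 𝔞.add_mem (hx a ha) (hy a ha)
    simpa [add_mul] using h
  zero_mem' := fun a ha => by simpa using 𝔞.zero_mem
  smul_mem' := fun c x hx a ha => by
    rw [smul_mul_assoc]; exact 𝔞.smul_mem c (hx a ha)

@[simp] lemma mem_invSubmodule {𝔞 : Submodule (𝓞 F) D} {x : D} :
    x ∈ invSubmodule 𝔞 ↔ x ∈ invSet (𝔞 : Set D) := Iff.rfl

@[simp] lemma mem_leftOrderSubmodule {𝔞 : Submodule (𝓞 F) D} {x : D} :
    x ∈ leftOrderSubmodule 𝔞 ↔ x ∈ leftOrderSet (𝔞 : Set D) := Iff.rfl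

variable (Δ : Subalgebra (𝓞 F) D) (𝔞 : Submodule (𝓞 F) D) (m : ℕ)

/-- The lattice of allowed entries at position `(i, j)`. -/
def entryMod : Fin (m + 1) → Fin (m + 1) → Submodule (𝓞 F) D := fun i j =>
  if i = Fin.last m then (if j = Fin.last m then leftOrderSubmodule 𝔞 else 𝔞)
  else (if j = Fin.last m then invSubmodule 𝔞 else Subalgebra.toSubmodule Δ)

section InstanceControl
-- Remove the directly-defined matrix module instances so that the instances used
-- below agree (syntactically) with those appearing in the theorem statement.
attribute [-instance] Matrix.module Matrix.addCommMonoid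

/-- The candidate order, as a submodule of the matrix ring (with the module
structure of the statement). -/
def lamMod : Submodule (𝓞 F) (Matrix (Fin (m + 1)) (Fin (m + 1)) D) where
  carrier := {x | ∀ i j, x i j ∈ entryMod Δ 𝔞 m i j}
  add_mem' := fun {x y} hx hy i j => (entryMod Δ 𝔞 m i j).add_mem (hx i j) (hy i j)
  zero_mem' := fun i j => (entryMod Δ 𝔞 m i j).zero_mem
  smul_mem' := fun c x hx i j => by
    show (algebraMap (𝓞 F) F c) • (x i j) ∈ entryMod Δ 𝔞 m i j
    have h : (algebraMap (𝓞 F) F c) • (x i j) = c • (x i j) := algebraMap_smul F c (x i j)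
    rw [h]
    exact (entryMod Δ 𝔞 m i j).smul_mem c (hx i j)

lemma mem_lamMod {x : Matrix (Fin (m + 1)) (Fin (m + 1)) D} :
    x ∈ lamMod Δ 𝔞 m ↔ ∀ i j, x i j ∈ entryMod Δ 𝔞 m i j := Iff.rfl

/-- `stdBasisMatrix` as an `𝓞 F`-linear map (into the statement's module
structure on matrices). -/
def sbO (i j : Fin (m + 1)) :
    D →ₗ[𝓞 F] Matrix (Fin (m + 1)) (Fin (m + 1)) D where
  toFun := Matrix.single i j
  map_add' := Matrix.single_add i j
  map_smul' := fun c d => by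
    show Matrix.single i j (c • d) = (algebraMap (𝓞 F) F c) • Matrix.single i j d
    have h : (algebraMap (𝓞 F) F c) • d = c • d := algebraMap_smul F c d
    rw [← h]
    ext a b
    show (if i = a ∧ j = b then (algebraMap (𝓞 F) F c) • d else 0) =
      (algebraMap (𝓞 F) F c) • (if i = a ∧ j = b then d else 0)
    split_ifs with hab
    · rfl
    · rw [smul_zero]

/-- `stdBasisMatrix` as an `F`-linear map. -/
def sbF (i j : Fin (m + 1)) : D →ₗ[F] Matrix (Fin (m + 1)) (Fin (m + 1)) D where
  toFun := Matrix.single i j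
  map_add' := Matrix.single_add i j
  map_smul' := fun c d => by
    ext a b
    show (if i = a ∧ j = b then c • d else 0) = c • (if i = a ∧ j = b then d else 0)
    split_ifs with hab
    · rfl
    · rw [smul_zero]

lemma stdBasis_mem_lamMod {i j : Fin (m + 1)} {d : D}
    (hd : d ∈ entryMod Δ 𝔞 m i j) : Matrix.single i j d ∈ lamMod Δ 𝔞 m := by
  intro a b
  simp only [Matrix.single, Matrix.of_apply]
  split_ifs with h
  · obtain ⟨rfl, rfl⟩ := h; exact hd
  · exact (entryMod Δ 𝔞 m a b).zero_mem

lemma lamMod_fg (a₀ : D) (ha₀ : a₀ ∈ 𝔞) (ha₀ne : a₀ ≠ 0)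
    (hΔfg : (Subalgebra.toSubmodule Δ).FG) (h𝔞fg : 𝔞.FG) : (lamMod Δ 𝔞 m).FG := by
  have hNfg : ∀ i j, (entryMod Δ 𝔞 m i j).FG := by
    intro i j
    by_cases hi : i = Fin.last m <;> by_cases hj : j = Fin.last m <;>
      simp only [entryMod, hi, hj, ite_true, ite_false]
    · -- Δ' is f.g.
      refine fg_of_le_fg (P := Submodule.map (LinearMap.mulRight (𝓞 F) a₀⁻¹) 𝔞) ?_
        (h𝔞fg.map _)
      intro x hx
      exact ⟨x * a₀, hx a₀ ha₀, by
        simp [LinearMap.mulRight_apply, mul_assoc, mul_inv_cancel₀ ha₀ne]⟩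
    · exact h𝔞fg
    · -- 𝔞⁻¹ is f.g.
      refine fg_of_le_fg (P := Submodule.map ((LinearMap.mulLeft (𝓞 F) a₀⁻¹).comp
        (LinearMap.mulRight (𝓞 F) a₀⁻¹)) 𝔞) ?_ (h𝔞fg.map _)
      intro x hx
      refine ⟨a₀ * x * a₀, hx a₀ ha₀ a₀ ha₀, ?_⟩
      simp only [LinearMap.coe_comp, Function.comp_apply, LinearMap.mulRight_apply,
        LinearMap.mulLeft_apply]
      rw [mul_assoc (a₀ * x), mul_inv_cancel₀ ha₀ne, mul_one, ← mul_assoc,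
        inv_mul_cancel₀ ha₀ne, one_mul]
    · exact hΔfg
  have hdecomp : lamMod Δ 𝔞 m = ⨆ p : Fin (m + 1) × Fin (m + 1),
      Submodule.map (sbO m p.1 p.2) (entryMod Δ 𝔞 m p.1 p.2) := by
    apply le_antisymm
    · intro x hx
      rw [Matrix.matrix_eq_sum_single x]
      refine Submodule.sum_mem _ fun i _ => Submodule.sum_mem _ fun j _ => ?_
      exact Submodule.mem_iSup_of_mem (i, j) ⟨x i j, hx i j, rfl⟩
    · refine iSup_le fun p => ?_
      rintro _ ⟨d, hd, rfl⟩
      exact stdBasis_mem_lamMod Δ 𝔞 m hd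
  rw [hdecomp]
  exact Submodule.fg_iSup _ fun p => (hNfg p.1 p.2).map _

lemma lamMod_span
    (hΔspan : Submodule.span F ((Subalgebra.toSubmodule Δ : Set D)) = ⊤)
    (h𝔞span : Submodule.span F (𝔞 : Set D) = ⊤)
    (h𝔞lo : ∀ a ∈ 𝔞, a ∈ leftOrderSet (𝔞 : Set D))
    (hΔinv : ∀ x ∈ Δ, x ∈ invSet (𝔞 : Set D)) :
    Submodule.span F ((lamMod Δ 𝔞 m : Set (Matrix (Fin (m + 1)) (Fin (m + 1)) D))) = ⊤ := by
  have hNspan : ∀ i j, Submodule.span F ((entryMod Δ 𝔞 m i j : Set D)) = ⊤ := by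
    intro i j
    by_cases hi : i = Fin.last m <;> by_cases hj : j = Fin.last m <;>
      simp only [entryMod, hi, hj, ite_true, ite_false]
    · -- Δ' ⊇ 𝔞
      rw [eq_top_iff, ← h𝔞span]
      exact Submodule.span_mono h𝔞lo
    · exact h𝔞span
    · -- 𝔞⁻¹ ⊇ Δ
      rw [eq_top_iff, ← hΔspan]
      refine Submodule.span_mono ?_
      intro x hx
      exact hΔinv x (by simpa using hx)
    · exact hΔspan
  rw [eq_top_iff]
  intro x _
  rw [Matrix.matrix_eq_sum_single x]
  refine Submodule.sum_mem _ fun i _ => Submodule.sum_mem _ fun j _ => ?_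
  have hx : x i j ∈ Submodule.span F ((entryMod Δ 𝔞 m i j : Set D)) := by
    rw [hNspan i j]; trivial
  have hmem : Matrix.single i j (x i j) ∈
      Submodule.map (sbF m i j) (Submodule.span F ((entryMod Δ 𝔞 m i j : Set D))) :=
    ⟨x i j, hx, rfl⟩
  rw [Submodule.map_span] at hmem
  refine Submodule.span_mono ?_ hmem
  rintro _ ⟨d, hd, rfl⟩
  exact stdBasis_mem_lamMod Δ 𝔞 m hd

end InstanceControl

end Aux

theorem statement6 (F D : Type) [Field F] [NumberField F] [DivisionRing D] [Algebra F D]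
    [Algebra (𝓞 F) D] [IsScalarTower (𝓞 F) F D] [FiniteDimensional F D]
    (hcentral : Subalgebra.center F D = ⊥)
    (Δ : Subalgebra (𝓞 F) D) (hΔ : IsMaximalOrder F D Δ)
    -- 𝔞 is a right ideal of Δ which is a full O_F-lattice in D
    (𝔞 : Submodule (𝓞 F) D) (h𝔞full : IsFullLattice F D 𝔞)
    (h𝔞Δ : (𝔞 : Set D) ⊆ Δ) (h𝔞right : ∀ a ∈ 𝔞, ∀ x ∈ Δ, a * x ∈ 𝔞)
    (m : ℕ) :
    ∃ Λ : Subalgebra (𝓞 F) (Matrix (Fin (m + 1)) (Fin (m + 1)) D),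
      (Λ : Set (Matrix (Fin (m + 1)) (Fin (m + 1)) D)) =
        {x | ∀ i j : Fin (m + 1),
          (i ≠ Fin.last m → j ≠ Fin.last m → x i j ∈ Δ) ∧
          (i ≠ Fin.last m → j = Fin.last m → x i j ∈ invSet (𝔞 : Set D)) ∧
          (i = Fin.last m → j ≠ Fin.last m → x i j ∈ 𝔞) ∧
          (i = Fin.last m → j = Fin.last m → x i j ∈ leftOrderSet (𝔞 : Set D))} ∧
      IsOrder F (Matrix (Fin (m + 1)) (Fin (m + 1)) D) Λ := by
  classical
  -- a nonzero element of 𝔞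
  obtain ⟨a₀, ha₀, ha₀ne⟩ : ∃ a₀ ∈ 𝔞, a₀ ≠ (0 : D) := by
    by_contra h
    push_neg at h
    have h𝔞bot : (𝔞 : Set D) ⊆ {0} := fun x hx => h x hx
    have hle : Submodule.span F (𝔞 : Set D) ≤ Submodule.span F ({0} : Set D) :=
      Submodule.span_mono h𝔞bot
    rw [h𝔞full.2, Submodule.span_zero_singleton] at hle
    exact absurd (top_le_iff.mp hle) (by simp)
  -- basic membership facts
  have hΔinv : ∀ x ∈ Δ, x ∈ invSet (𝔞 : Set D) := fun x hx a ha b hb =>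
    h𝔞right _ (h𝔞right a ha x hx) b (h𝔞Δ hb)
  have h𝔞lo : ∀ a ∈ 𝔞, a ∈ leftOrderSet (𝔞 : Set D) := fun a ha b hb =>
    h𝔞right a ha b (h𝔞Δ hb)
  -- the right order O_r(𝔞) equals Δ, by maximality
  have hOr : ∀ x : D, (∀ a ∈ 𝔞, a * x ∈ 𝔞) → x ∈ Δ := by
    intro x hx
    set OrM : Submodule (𝓞 F) D :=
      { carrier := {y | ∀ a ∈ 𝔞, a * y ∈ 𝔞}
        add_mem' := fun {y z} hy hz a ha => by
          rw [mul_add]; exact 𝔞.add_mem (hy a ha) (hz a ha)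
        zero_mem' := fun a ha => by simpa using 𝔞.zero_mem
        smul_mem' := fun c y hy a ha => by
          rw [mul_smul_comm]; exact 𝔞.smul_mem c (hy a ha) } with hOrM
    have hone : (1 : D) ∈ OrM := fun a ha => by simpa using ha
    have hmul : ∀ y z, y ∈ OrM → z ∈ OrM → y * z ∈ OrM := fun y z hy hz a ha => by
      rw [← mul_assoc]; exact hz (a * y) (hy a ha)
    set OrA : Subalgebra (𝓞 F) D := OrM.toSubalgebra hone hmul with hOrA
    have hle : Δ ≤ OrA := fun y hy a ha => h𝔞right a ha y hy
    have horder : IsOrder F D OrA := by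
      constructor
      · -- f.g.: OrM ⊆ a₀⁻¹ • 𝔞
        rw [hOrA, Submodule.toSubalgebra_toSubmodule]
        refine fg_of_le_fg (P := Submodule.map (LinearMap.mulLeft (𝓞 F) a₀⁻¹) 𝔞) ?_
          (h𝔞full.1.map _)
        intro y hy
        exact ⟨a₀ * y, hy a₀ ha₀, by
          simp [LinearMap.mulLeft_apply, ← mul_assoc, inv_mul_cancel₀ ha₀ne]⟩
      · rw [hOrA, Submodule.toSubalgebra_toSubmodule]
        rw [eq_top_iff, ← hΔ.1.2]
        exact Submodule.span_mono hle
    have heq := hΔ.2 OrA horder hle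
    rw [← heq]
    exact hx
  -- the hard product rule: 𝔞⁻¹ · 𝔞 ⊆ Δ
  have hinv𝔞 : ∀ x ∈ invSet (𝔞 : Set D), ∀ b ∈ 𝔞, x * b ∈ Δ := by
    intro x hx b hb
    exact hOr (x * b) (fun a ha => by rw [← mul_assoc]; exact hx a ha b hb)
  -- product rules for the entry lattices
  have pLL : ∀ u ∈ leftOrderSet (𝔞 : Set D), ∀ v ∈ leftOrderSet (𝔞 : Set D),
      u * v ∈ leftOrderSet (𝔞 : Set D) := fun u hu v hv a ha => by
    rw [mul_assoc]; exact hu _ (hv a ha)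
  have pAI : ∀ u ∈ (𝔞 : Set D), ∀ v ∈ invSet (𝔞 : Set D),
      u * v ∈ leftOrderSet (𝔞 : Set D) := fun u hu v hv b hb => hv u hu b hb
  have pLA : ∀ u ∈ leftOrderSet (𝔞 : Set D), ∀ v ∈ (𝔞 : Set D), u * v ∈ 𝔞 :=
    fun u hu v hv => hu v hv
  have pAD : ∀ u ∈ (𝔞 : Set D), ∀ v ∈ Δ, u * v ∈ 𝔞 := fun u hu v hv => h𝔞right u hu v hv
  have pIL : ∀ u ∈ invSet (𝔞 : Set D), ∀ v ∈ leftOrderSet (𝔞 : Set D),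
      u * v ∈ invSet (𝔞 : Set D) := by
    intro u hu v hv a ha b hb
    have e : a * (u * v) * b = a * u * (v * b) := by noncomm_ring
    rw [e]; exact hu a ha _ (hv b hb)
  have pDI : ∀ u ∈ Δ, ∀ v ∈ invSet (𝔞 : Set D), u * v ∈ invSet (𝔞 : Set D) := by
    intro u hu v hv a ha b hb
    have e : a * (u * v) * b = a * u * v * b := by noncomm_ring
    rw [e]; exact hv _ (h𝔞right a ha u hu) b hb
  have pIA : ∀ u ∈ invSet (𝔞 : Set D), ∀ v ∈ (𝔞 : Set D), u * v ∈ Δ :=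
    fun u hu v hv => hinv𝔞 u hu v hv
  have pDD : ∀ u ∈ Δ, ∀ v ∈ Δ, u * v ∈ Δ := fun u hu v hv => Δ.mul_mem hu hv
  -- identity matrix is in lamMod
  have hone : (1 : Matrix (Fin (m + 1)) (Fin (m + 1)) D) ∈ lamMod Δ 𝔞 m := by
    intro i j
    rw [Matrix.one_apply]
    by_cases hij : i = j
    · simp only [hij, if_pos rfl]
      by_cases hjl : j = Fin.last m <;>
        simp [entryMod, hjl, Subalgebra.one_mem, leftOrderSet]
    · simp only [if_neg hij]
      exact (entryMod Δ 𝔞 m i j).zero_mem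
  -- closure under multiplication
  have hmul : ∀ x y : Matrix (Fin (m + 1)) (Fin (m + 1)) D,
      x ∈ lamMod Δ 𝔞 m → y ∈ lamMod Δ 𝔞 m → x * y ∈ lamMod Δ 𝔞 m := by
    intro x y hx hy i j
    rw [Matrix.mul_apply]
    refine (entryMod Δ 𝔞 m i j).sum_mem fun k _ => ?_
    have hxk := hx i k
    have hyk := hy k j
    by_cases hi : i = Fin.last m <;> by_cases hj : j = Fin.last m <;>
      by_cases hk : k = Fin.last m <;>
      simp only [entryMod, hi, hj, hk, if_pos rfl, if_neg, ite_true, ite_false,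
        if_true, if_false, mem_invSubmodule, mem_leftOrderSubmodule,
        Subalgebra.mem_toSubmodule, not_false_iff] at hxk hyk ⊢
    · exact pLL _ hxk _ hyk
    · exact pAI _ hxk _ hyk
    · exact pLA _ hxk _ hyk
    · exact pAD _ hxk _ hyk
    · exact pIL _ hxk _ hyk
    · exact pDI _ hxk _ hyk
    · exact pIA _ hxk _ hyk
    · exact pDD _ hxk _ hyk
  have Λdef : ∃ Λ : Subalgebra (𝓞 F) (Matrix (Fin (m + 1)) (Fin (m + 1)) D),
      Subalgebra.toSubmodule Λ = lamMod Δ 𝔞 m :=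
    ⟨Submodule.toSubalgebra (lamMod Δ 𝔞 m) hone hmul,
      Submodule.toSubalgebra_toSubmodule _ _ _⟩
  obtain ⟨Λ, hΛ⟩ := Λdef
  have hΛmem : ∀ x, x ∈ Λ ↔ x ∈ lamMod Δ 𝔞 m := by
    intro x
    rw [← hΛ]
    rfl
  refine ⟨Λ, ?_, ?_, ?_⟩
  · -- carrier identification
    ext x
    rw [SetLike.mem_coe, hΛmem x]
    constructor
    · intro h i j
      have hij := h i j
      refine ⟨?_, ?_, ?_, ?_⟩ <;> intro hi hj <;>
        simpa [entryMod, hi, hj] using hij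
    · intro h i j
      obtain ⟨h1, h2, h3, h4⟩ := h i j
      by_cases hi : i = Fin.last m <;> by_cases hj : j = Fin.last m
      · subst hi; subst hj
        simpa [entryMod] using h4 rfl rfl
      · subst hi
        simpa [entryMod, hj] using h3 rfl hj
      · subst hj
        simpa [entryMod, hi] using h2 hi rfl
      · simpa [entryMod, hi, hj] using h1 hi hj
  · -- f.g.
    rw [hΛ]
    exact lamMod_fg Δ 𝔞 m a₀ ha₀ ha₀ne hΔ.1.1 h𝔞full.1
  · -- spans over F
    rw [hΛ]
    exact lamMod_span Δ 𝔞 m hΔ.1.2 h𝔞full.2 h𝔞lo hΔinv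
end
end

section
/- Let S = (z₁, …, z_n) ∈ GL_n(D) be the matrix whose columns z₁, …, z_n ∈ D^n satisfy N = z₁Δ ⊕ ⋯ ⊕ z_{n−1}Δ ⊕ z_n𝔞 for a full right Δ-lattice N in D^n and a right Δ-ideal 𝔞. Then the left order O_l(N) := {λ ∈ M_n(D) | λN ⊆ N} equals S·Λ_{𝔞,n}·S^{-1}. -/
/-!
STATEMENT 8: S = (z₁, …, z_n) ∈ GL_n(D) the matrix whose columns satisfy
N = z₁Δ ⊕ ⋯ ⊕ z_{n−1}Δ ⊕ z_n𝔞 for a full right Δ-lattice N ⊆ D^n and a right Δ-ideal 𝔞.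
Then O_l(N) = S·Λ_{𝔞,n}·S⁻¹.  (Here n = m+1.)
-/

open NumberField

noncomputable section

/-- The underlying set of the nice maximal order `Λ_{𝔞,n}` (with `n = m+1`). -/
def niceOrderSet {F D : Type} [Field F] [NumberField F] [DivisionRing D] [Algebra F D]
    [Algebra (𝓞 F) D] (Δ : Subalgebra (𝓞 F) D) (𝔞 : Submodule (𝓞 F) D) (m : ℕ) :
    Set (Matrix (Fin (m + 1)) (Fin (m + 1)) D) :=
  {x | ∀ i j : Fin (m + 1),
    (i ≠ Fin.last m → j ≠ Fin.last m → x i j ∈ Δ) ∧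
    (i ≠ Fin.last m → j = Fin.last m → x i j ∈ invSet (𝔞 : Set D)) ∧
    (i = Fin.last m → j ≠ Fin.last m → x i j ∈ 𝔞) ∧
    (i = Fin.last m → j = Fin.last m → x i j ∈ leftOrderSet (𝔞 : Set D))}

theorem key (F D : Type) [Field F] [NumberField F] [DivisionRing D] [Algebra F D]
    [Algebra (𝓞 F) D] [IsScalarTower (𝓞 F) F D]
    (Δ : Subalgebra (𝓞 F) D)
    (hΔ : IsFullLattice F D (Subalgebra.toSubmodule Δ) ∧
      ∀ Δ' : Subalgebra (𝓞 F) D, IsFullLattice F D (Subalgebra.toSubmodule Δ') →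
        Δ ≤ Δ' → Δ' = Δ)
    (𝔞 : Submodule (𝓞 F) D) (h𝔞full : IsFullLattice F D 𝔞)
    (h𝔞right : ∀ a ∈ 𝔞, ∀ x ∈ Δ, a * x ∈ 𝔞) :
    ∀ y : D, (∀ b ∈ 𝔞, b * y ∈ 𝔞) → y ∈ Δ := by
  obtain ⟨a0, ha0, ha0ne⟩ : ∃ a ∈ 𝔞, a ≠ 0 := by
    by_contra h
    push_neg at h
    have hbot : (𝔞 : Set D) ⊆ {0} := fun x hx => h x hx
    have : Submodule.span F (𝔞 : Set D) ≤ ⊥ := by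
      rw [← Submodule.span_zero_singleton F]
      exact Submodule.span_mono hbot
    rw [h𝔞full.2] at this
    exact one_ne_zero ((Submodule.mem_bot F).mp (this Submodule.mem_top))
  set Δ' : Subalgebra (𝓞 F) D :=
    { carrier := {y | ∀ b ∈ 𝔞, b * y ∈ 𝔞}
      mul_mem' := fun {x y} hx hy b hb => by
        have h2 := hy _ (hx b hb)
        rwa [mul_assoc] at h2
      one_mem' := fun b hb => by simpa using hb
      add_mem' := fun {x y} hx hy b hb => by
        rw [mul_add]; exact 𝔞.add_mem (hx b hb) (hy b hb)
      zero_mem' := fun b hb => by simp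
      algebraMap_mem' := fun r b hb => by
        rw [← Algebra.commutes r b, ← Algebra.smul_def]
        exact 𝔞.smul_mem r hb } with hΔ'def
  intro y hy
  have hle : Δ ≤ Δ' := fun x hx b hb => h𝔞right b hb x hx
  have hsub : Subalgebra.toSubmodule Δ' ≤ 𝔞.map (LinearMap.mulLeft (𝓞 F) a0⁻¹) := by
    intro x hx
    exact ⟨a0 * x, hx a0 ha0, by simp [inv_mul_cancel_left₀ ha0ne]⟩
  have hQfg : (𝔞.map (LinearMap.mulLeft (𝓞 F) a0⁻¹)).FG := h𝔞full.1.map _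
  have hfg : (Subalgebra.toSubmodule Δ').FG := by
    set Q := 𝔞.map (LinearMap.mulLeft (𝓞 F) a0⁻¹)
    have : IsNoetherian (𝓞 F) Q := isNoetherian_of_fg_of_noetherian Q hQfg
    have h1 : (Submodule.comap Q.subtype (Subalgebra.toSubmodule Δ')).FG :=
      IsNoetherian.noetherian _
    have h2 := h1.map Q.subtype
    rwa [Submodule.map_comap_subtype, inf_eq_right.mpr hsub] at h2
  have hspan : Submodule.span F ((Subalgebra.toSubmodule Δ' : Submodule (𝓞 F) D) : Set D) = ⊤ := by
    rw [eq_top_iff, ← hΔ.1.2]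
    exact Submodule.span_mono hle
  rw [← hΔ.2 Δ' ⟨hfg, hspan⟩ hle]
  exact hy

theorem statement8 (F D : Type) [Field F] [NumberField F] [DivisionRing D] [Algebra F D]
    [Algebra (𝓞 F) D] [IsScalarTower (𝓞 F) F D] [FiniteDimensional F D]
    (hcentral : Subalgebra.center F D = ⊥)
    (Δ : Subalgebra (𝓞 F) D)
    (hΔ : IsFullLattice F D (Subalgebra.toSubmodule Δ) ∧
      ∀ Δ' : Subalgebra (𝓞 F) D, IsFullLattice F D (Subalgebra.toSubmodule Δ') →
        Δ ≤ Δ' → Δ' = Δ)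
    -- 𝔞 is a full right Δ-ideal
    (𝔞 : Submodule (𝓞 F) D) (h𝔞full : IsFullLattice F D 𝔞)
    (h𝔞right : ∀ a ∈ 𝔞, ∀ x ∈ Δ, a * x ∈ 𝔞)
    (m : ℕ)
    -- z₁, …, z_n ∈ D^n are the columns of an invertible matrix S, with inverse T
    (z : Fin (m + 1) → (Fin (m + 1) → D))
    (T : Matrix (Fin (m + 1)) (Fin (m + 1)) D)
    (hST : (Matrix.of fun i j => z j i) * T = 1)
    (hTS : T * (Matrix.of fun i j => z j i) = 1) :
    -- with N := z₁Δ ⊕ ⋯ ⊕ z_{m}Δ ⊕ z_{m+1}𝔞 (the sum is direct since S ∈ GL_n(D)),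
    -- the left order O_l(N) equals S·Λ_{𝔞,n}·S⁻¹
    {lam : Matrix (Fin (m + 1)) (Fin (m + 1)) D |
        ∀ v ∈ {w : Fin (m + 1) → D | ∃ c : Fin (m + 1) → D,
          (∀ j, j ≠ Fin.last m → c j ∈ Δ) ∧ c (Fin.last m) ∈ 𝔞 ∧
          w = fun i => ∑ j, z j i * c j},
        lam.mulVec v ∈ {w : Fin (m + 1) → D | ∃ c : Fin (m + 1) → D,
          (∀ j, j ≠ Fin.last m → c j ∈ Δ) ∧ c (Fin.last m) ∈ 𝔞 ∧
          w = fun i => ∑ j, z j i * c j}} =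
      (fun μ => (Matrix.of fun i j => z j i) * μ * T) '' niceOrderSet Δ 𝔞 m := by
  have hkey := key F D Δ hΔ 𝔞 h𝔞full h𝔞right
  set S : Matrix (Fin (m + 1)) (Fin (m + 1)) D := Matrix.of fun i j => z j i with hS
  have hSmul : ∀ c : Fin (m + 1) → D, (fun i => ∑ j, z j i * c j) = S.mulVec c := by
    intro c; rfl
  ext lam
  simp only [Set.mem_setOf_eq, Set.mem_image]
  constructor
  · -- left order ⊆ S Λ T
    intro hlam
    refine ⟨T * lam * S, ?_, by
      rw [← Matrix.mul_assoc, ← Matrix.mul_assoc, hST, Matrix.one_mul,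
        Matrix.mul_assoc, hST, Matrix.mul_one]⟩
    -- a helper: the image of an admissible column under μ := T * lam * S
    have hcol : ∀ c : Fin (m + 1) → D, (∀ j, j ≠ Fin.last m → c j ∈ Δ) →
        c (Fin.last m) ∈ 𝔞 →
        (∀ j, j ≠ Fin.last m → ((T * lam * S).mulVec c) j ∈ Δ) ∧
          ((T * lam * S).mulVec c) (Fin.last m) ∈ 𝔞 := by
      intro c hc1 hc2
      obtain ⟨c', hc'1, hc'2, hc'3⟩ := hlam (S.mulVec c) ⟨c, hc1, hc2, (hSmul c).symm⟩
      have : (T * lam * S).mulVec c = c' := by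
        rw [hSmul] at hc'3
        have e1 : (T * lam * S).mulVec c = T.mulVec (lam.mulVec (S.mulVec c)) := by
          rw [Matrix.mulVec_mulVec, Matrix.mulVec_mulVec]
        rw [e1, hc'3, Matrix.mulVec_mulVec, hTS, Matrix.one_mulVec]
      rw [this]
      exact ⟨hc'1, hc'2⟩
    intro i j
    set n := Fin.last m
    -- apply hcol to single columns
    have hsingle : ∀ (k : Fin (m + 1)) (d : D),
        (T * lam * S).mulVec (Pi.single k d) = fun i => (T * lam * S) i k * d :=
      fun k d => Matrix.mulVec_single _ _ _
    refine ⟨?_, ?_, ?_, ?_⟩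
    · intro hi hj
      have := hcol (Pi.single j 1) (fun j' hj' => by
          rcases eq_or_ne j' j with rfl | h
          · simpa using Δ.one_mem
          · simpa [Pi.single_eq_of_ne h] using Δ.zero_mem)
        (by simpa [Pi.single_eq_of_ne (Ne.symm hj)] using 𝔞.zero_mem)
      have h1 := this.1 i hi
      rw [hsingle] at h1
      simpa using h1
    · intro hi hj
      subst hj
      intro a ha b hb
      have := hcol (Pi.single (Fin.last m) b) (fun j' hj' => by
          have hj'' : j' ≠ Fin.last m := hj'
          simpa [Pi.single_eq_of_ne hj''] using Δ.zero_mem)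
        (by show (Pi.single (Fin.last m) b : Fin (m + 1) → D) (Fin.last m) ∈ 𝔞; simpa using hb)
      have h1 := this.1 i hi
      rw [hsingle] at h1
      simp only at h1
      rw [mul_assoc]
      exact h𝔞right a ha _ h1
    · intro hi hj
      subst hi
      have := hcol (Pi.single j 1) (fun j' hj' => by
          rcases eq_or_ne j' j with rfl | h
          · simpa using Δ.one_mem
          · simpa [Pi.single_eq_of_ne h] using Δ.zero_mem)
        (by simpa [Pi.single_eq_of_ne (Ne.symm hj)] using 𝔞.zero_mem)
      have h1 := this.2
      rw [hsingle] at h1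
      simpa using h1
    · intro hi hj
      subst hi; subst hj
      intro a ha
      have := hcol (Pi.single (Fin.last m) a) (fun j' hj' => by
          have hj'' : j' ≠ Fin.last m := hj'
          simpa [Pi.single_eq_of_ne hj''] using Δ.zero_mem)
        (by show (Pi.single (Fin.last m) a : Fin (m + 1) → D) (Fin.last m) ∈ 𝔞; simpa using ha)
      have h1 := this.2
      rw [hsingle] at h1
      simpa using h1
  · -- S Λ T ⊆ left order
    rintro ⟨μ, hμ, rfl⟩ v ⟨c, hc1, hc2, rfl⟩
    refine ⟨μ.mulVec c, ?_, ?_, ?_⟩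
    · intro j hj
      show ∑ k, μ j k * c k ∈ Δ
      apply Subalgebra.sum_mem
      intro k _
      rcases eq_or_ne k (Fin.last m) with rfl | hk
      · exact hkey _ (fun b hb => by
          rw [← mul_assoc]
          exact (hμ j (Fin.last m)).2.1 hj rfl b hb _ hc2)
      · exact Δ.mul_mem ((hμ j k).1 hj hk) (hc1 k hk)
    · show ∑ k, μ (Fin.last m) k * c k ∈ 𝔞
      apply Submodule.sum_mem
      intro k _
      rcases eq_or_ne k (Fin.last m) with rfl | hk
      · exact (hμ (Fin.last m) (Fin.last m)).2.2.2 rfl rfl _ hc2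
      · exact h𝔞right _ ((hμ (Fin.last m) k).2.2.1 rfl hk) _ (hc1 k hk)
    · rw [hSmul, hSmul, Matrix.mulVec_mulVec, Matrix.mulVec_mulVec,
        Matrix.mul_assoc (S * μ) T S, hTS, Matrix.mul_one]
end
end
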